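/- Let h, j, s be integers with 1 ≤ s ≤ j−1, and let ρ ∈ S_h be a permutation with norm N(ρ) = j. If there exists at least one pair (σ, τ) of permutations in S_h with σ of cycle type (2,…,2) consisting of s twos, τ of cycle type {j+1−s} (a single (j+1−s)-cycle), and στ = ρ, then the cycle type of ρ is either Multiset.replicate r 2 + {j+1−r} for some 0 ≤ r ≤ j−2, or Multiset.replicate j 2 (i.e., ρ is a product of j disjoint transpositions). -/

import Mathlib

/-- The norm of a permutation: the sum over its cycle type of (cycle length − 1). -/
def permNorm {α : Type*} [Fintype α] [DecidableEq α] (σ : Equiv.Perm α) : ℕ :=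
  (σ.cycleType.map (· - 1)).sum

section Main
open Equiv Equiv.Perm

variable {α : Type*} [Fintype α] [DecidableEq α]

private lemma permNorm_aux_sum (M : Multiset ℕ) (hM : ∀ x ∈ M, 1 ≤ x) :
    (M.map (· - 1)).sum + Multiset.card M = M.sum := by
  induction M using Multiset.induction_on with
  | empty => simp
  | cons a M ih =>
    simp only [Multiset.map_cons, Multiset.sum_cons, Multiset.card_cons]
    have h1 : 1 ≤ a := hM a (Multiset.mem_cons_self a M)
    have := ih (fun x hx => hM x (Multiset.mem_cons_of_mem hx))
    omega

private lemma permNorm_add_card (f : Equiv.Perm α) :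
    permNorm f + Multiset.card f.cycleType = f.support.card := by
  rw [permNorm, permNorm_aux_sum _ (fun x hx => le_trans one_le_two (two_le_of_mem_cycleType hx)),
    sum_cycleType]

private lemma permNorm_le_of_ne_one {f : Equiv.Perm α} (hf : f ≠ 1) :
    permNorm f + 1 ≤ f.support.card := by
  have h := permNorm_add_card f
  have : Multiset.card f.cycleType ≠ 0 := by
    simp [Multiset.card_eq_zero, cycleType_eq_zero, hf]
  omega

@[simp] private lemma permNorm_one : permNorm (1 : Equiv.Perm α) = 0 := by simp [permNorm]

private lemma permNorm_disjoint_mul {f g : Equiv.Perm α} (h : Equiv.Perm.Disjoint f g) :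
    permNorm (f * g) = permNorm f + permNorm g := by
  simp [permNorm, h.cycleType_mul]

private lemma IsCycle.permNorm_succ {c : Equiv.Perm α} (hc : c.IsCycle) :
    permNorm c + 1 = c.support.card := by
  have := permNorm_add_card c
  rw [hc.cycleType] at this
  simpa using this

private lemma sign_permNorm (f : Equiv.Perm α) :
    Equiv.Perm.sign f = (-1 : ℤˣ) ^ (permNorm f) := by
  rw [sign_of_cycleType]
  have h := permNorm_add_card f
  have : f.cycleType.sum + Multiset.card f.cycleType
      = permNorm f + 2 * Multiset.card f.cycleType := by
    rw [← sum_cycleType] at h; omega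
  rw [this, pow_add, pow_mul]
  simp

private lemma neg_one_pow_mod_eq {m n : ℕ} (h : (-1 : ℤˣ) ^ m = (-1) ^ n) :
    m % 2 = n % 2 := by
  rcases Nat.even_or_odd m with hm | hm <;> rcases Nat.even_or_odd n with hn | hn
  · rw [Nat.even_iff] at hm hn; omega
  · rw [hm.neg_one_pow, hn.neg_one_pow] at h
    exact absurd h (by decide)
  · rw [hm.neg_one_pow, hn.neg_one_pow] at h
    exact absurd h (by decide)
  · rw [Nat.odd_iff] at hm hn; omega

private lemma cycleOf_apply_mem_support {f : Equiv.Perm α} {a x : α}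
    (hx : x ∈ (f.cycleOf a).support) : (f.cycleOf a) x = f x := by
  rw [mem_support_cycleOf_iff] at hx
  exact hx.1.cycleOf_apply

private lemma disjoint_cycleOf_rest (f : Equiv.Perm α) (a : α) :
    Equiv.Perm.Disjoint (f.cycleOf a) ((f.cycleOf a)⁻¹ * f) := by
  intro x
  by_cases hx : x ∈ (f.cycleOf a).support
  · right
    have := cycleOf_apply_mem_support hx
    simp [Equiv.Perm.mul_apply, ← this]
  · left
    simpa [Equiv.Perm.mem_support, not_not] using hx

private lemma cycleOf_mul_rest (f : Equiv.Perm α) (a : α) :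
    (f.cycleOf a) * ((f.cycleOf a)⁻¹ * f) = f := by group

private lemma support_rest_le (f : Equiv.Perm α) (a : α) :
    ((f.cycleOf a)⁻¹ * f).support ⊆ f.support := by
  intro x hx
  have h := support_mul_le (f.cycleOf a)⁻¹ f hx
  rcases Finset.mem_union.mp h with h | h
  · rw [support_inv] at h
    exact support_cycleOf_le f a h
  · exact h

private lemma permNorm_lip_aux {f : Equiv.Perm α} {a b : α} (hab : a ≠ b) (hfa : f a ≠ a) :
    permNorm (Equiv.swap a b * f) ≤ permNorm f + 1 := by
  set c := f.cycleOf a with hc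
  have hcyc : c.IsCycle := isCycle_cycleOf f hfa
  have hac : a ∈ c.support := by
    rw [hc, mem_support_cycleOf_iff]
    exact ⟨Equiv.Perm.SameCycle.refl _ _, mem_support.mpr hfa⟩
  have hdisj : Equiv.Perm.Disjoint c (c⁻¹ * f) := disjoint_cycleOf_rest f a
  have hmul : c * (c⁻¹ * f) = f := cycleOf_mul_rest f a
  have hdsupp := disjoint_iff_disjoint_support.mp hdisj
  by_cases hb : b ∈ c.support ∨ f b = b
  · set d := c⁻¹ * f with hd
    have hbd : b ∉ d.support := by
      rcases hb with h | h
      · exact Finset.disjoint_left.mp hdsupp h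
      · intro hmem
        exact (mem_support.mp (support_rest_le f a hmem)) h
    have key : Equiv.swap a b * f = (Equiv.swap a b * c) * d := by
      rw [mul_assoc, hmul]
    have hsupp_tc : (Equiv.swap a b * c).support ⊆ insert b c.support := by
      intro x hx
      have h := support_mul_le (Equiv.swap a b) c hx
      rcases Finset.mem_union.mp h with h | h
      · rw [support_swap hab] at h
        rcases Finset.mem_insert.mp h with rfl | h
        · exact Finset.mem_insert_of_mem hac
        · rw [Finset.mem_singleton] at h
          exact h ▸ Finset.mem_insert_self _ _
      · exact Finset.mem_insert_of_mem h
    have hdisj2 : Equiv.Perm.Disjoint (Equiv.swap a b * c) d := by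
      rw [disjoint_iff_disjoint_support]
      refine Finset.disjoint_left.mpr fun x hx hxd => ?_
      rcases Finset.mem_insert.mp (hsupp_tc hx) with rfl | h
      · exact hbd hxd
      · exact Finset.disjoint_left.mp hdsupp h hxd
    have hNf : permNorm f = permNorm c + permNorm d := by
      rw [← hmul, permNorm_disjoint_mul hdisj]
    have hbound : permNorm (Equiv.swap a b * c) ≤ permNorm c + 1 := by
      by_cases h1 : Equiv.swap a b * c = 1
      · simp [h1, permNorm]
      · have h2 := permNorm_le_of_ne_one h1
        have h3 : (Equiv.swap a b * c).support.card ≤ c.support.card + 1 :=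
          le_trans (Finset.card_le_card hsupp_tc) (Finset.card_insert_le _ _)
        have h4 := IsCycle.permNorm_succ hcyc
        omega
    rw [key, permNorm_disjoint_mul hdisj2]
    omega
  · push_neg at hb
    obtain ⟨hbc, hfb⟩ := hb
    set e := c⁻¹ * f with he
    have hfbc : f b ∉ c.support := by
      intro hmem
      apply hbc
      rw [hc, mem_support_cycleOf_iff] at hmem ⊢
      exact ⟨sameCycle_apply_right.mp hmem.1, hmem.2⟩
    have heb : e b = f b := by
      have h' : f b ∉ (c⁻¹).support := by rwa [support_inv]
      have : c⁻¹ (f b) = f b := notMem_support.mp h'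
      simp [he, Equiv.Perm.mul_apply, this]
    have heb' : e b ≠ b := heb ▸ hfb
    set c₂ := e.cycleOf b with hc2
    have hcyc2 : c₂.IsCycle := isCycle_cycleOf e heb'
    have hbc2 : b ∈ c₂.support := by
      rw [hc2, mem_support_cycleOf_iff]
      exact ⟨Equiv.Perm.SameCycle.refl _ _, mem_support.mpr heb'⟩
    set d := c₂⁻¹ * e with hd
    have hdisj2 : Equiv.Perm.Disjoint c₂ d := disjoint_cycleOf_rest e b
    have hmul2 : c₂ * d = e := cycleOf_mul_rest e b
    have hd2supp := disjoint_iff_disjoint_support.mp hdisj2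
    have hsde : d.support ⊆ e.support := support_rest_le e b
    have hsce : _root_.Disjoint c.support e.support := hdsupp
    have key : Equiv.swap a b * f = ((Equiv.swap a b * c) * c₂) * d := by
      rw [← hmul, ← hmul2]; group
    have hsupp_tcc : ((Equiv.swap a b * c) * c₂).support ⊆ c.support ∪ c₂.support := by
      intro x hx
      rcases Finset.mem_union.mp (support_mul_le _ _ hx) with h | h
      · rcases Finset.mem_union.mp (support_mul_le _ _ h) with h | h
        · rw [support_swap hab] at h
          rcases Finset.mem_insert.mp h with rfl | h
          · exact Finset.mem_union_left _ hac
          · rw [Finset.mem_singleton] at h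
            exact h ▸ Finset.mem_union_right _ hbc2
        · exact Finset.mem_union_left _ h
      · exact Finset.mem_union_right _ h
    have hdisj3 : Equiv.Perm.Disjoint ((Equiv.swap a b * c) * c₂) d := by
      rw [disjoint_iff_disjoint_support]
      refine Finset.disjoint_left.mpr fun x hx hxd => ?_
      rcases Finset.mem_union.mp (hsupp_tcc hx) with h | h
      · exact Finset.disjoint_left.mp hsce h (hsde hxd)
      · exact Finset.disjoint_left.mp hd2supp h hxd
    have hNf : permNorm f = permNorm c + (permNorm c₂ + permNorm d) := by
      rw [← hmul, permNorm_disjoint_mul hdisj, ← hmul2, permNorm_disjoint_mul hdisj2]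
    have hbound : permNorm ((Equiv.swap a b * c) * c₂)
        ≤ permNorm c + permNorm c₂ + 1 := by
      by_cases h1 : (Equiv.swap a b * c) * c₂ = 1
      · simp [h1, permNorm]
      · have h2 := permNorm_le_of_ne_one h1
        have h3 : ((Equiv.swap a b * c) * c₂).support.card
            ≤ c.support.card + c₂.support.card :=
          le_trans (Finset.card_le_card hsupp_tcc) (Finset.card_union_le _ _)
        have h4 := IsCycle.permNorm_succ hcyc
        have h5 := IsCycle.permNorm_succ hcyc2
        omega
    rw [key, permNorm_disjoint_mul hdisj3]
    omega

private lemma permNorm_lip {f : Equiv.Perm α} {a b : α} (hab : a ≠ b) :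
    permNorm (Equiv.swap a b * f) ≤ permNorm f + 1 := by
  by_cases hfa : f a = a
  · by_cases hfb : f b = b
    · have hdisj : Equiv.Perm.Disjoint (Equiv.swap a b) f := by
        intro x
        by_cases hx : x = a
        · right; rw [hx, hfa]
        · by_cases hx' : x = b
          · right; rw [hx', hfb]
          · left; exact Equiv.swap_apply_of_ne_of_ne hx hx'
      rw [permNorm_disjoint_mul hdisj]
      have h1 : permNorm (Equiv.swap a b) + 1 = (Equiv.swap a b).support.card :=
        IsCycle.permNorm_succ (isCycle_swap hab)
      rw [support_swap hab] at h1
      have : ({a, b} : Finset α).card = 2 := by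
        rw [Finset.card_insert_of_notMem (by simpa using hab), Finset.card_singleton]
      omega
    · rw [Equiv.swap_comm]
      exact permNorm_lip_aux hab.symm hfb
  · exact permNorm_lip_aux hab hfa

private lemma invol_peel {σ : Equiv.Perm α} {k : ℕ}
    (hσ : σ.cycleType = Multiset.replicate (k+1) 2)
    {a : α} (ha : a ∈ σ.support) :
    (σ * Equiv.swap a (σ a)).cycleType = Multiset.replicate k 2 := by
  have hfa : σ a ≠ a := mem_support.mp ha
  have hord : orderOf σ ∣ 2 := by
    rw [← lcm_cycleType, hσ]
    exact Multiset.lcm_dvd.mpr (fun x hx => by rw [Multiset.eq_of_mem_replicate hx])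
  have hσ2 : σ * σ = 1 := by
    have := orderOf_dvd_iff_pow_eq_one.mp hord
    rwa [pow_two] at this
  have hinv : σ⁻¹ = σ := inv_eq_of_mul_eq_one_right hσ2
  have happ : ∀ x, σ (σ x) = x := fun x => by
    have : (σ * σ) x = (1 : Equiv.Perm α) x := by rw [hσ2]
    simpa using this
  set b := σ a with hb
  have hab : a ≠ b := fun h => hfa h.symm
  set t := Equiv.swap a b with ht
  set σ' := σ * t with hσ'
  have hcomm : σ * t * σ = t := by
    have := (Equiv.swap_apply_apply σ a b).symm
    rw [hinv] at this
    rw [this, ← hb, happ a, Equiv.swap_comm]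
  have hσ'2 : σ' * σ' = 1 := by
    rw [hσ', show σ * t * (σ * t) = (σ * t * σ) * t by group, hcomm, ht, Equiv.swap_mul_self]
  have hσ'a : σ' a = a := by
    rw [hσ', Equiv.Perm.mul_apply, ht, Equiv.swap_apply_left, hb, happ]
  have hσ'b : σ' b = b := by
    rw [hσ', Equiv.Perm.mul_apply, ht, Equiv.swap_apply_right, hb]
  have hσ'x : ∀ x, x ≠ a → x ≠ b → σ' x = σ x := fun x hxa hxb => by
    rw [hσ', Equiv.Perm.mul_apply, ht, Equiv.swap_apply_of_ne_of_ne hxa hxb]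
  have hsupp : σ'.support = σ.support \ {a, b} := by
    ext x
    by_cases hxa : x = a
    · subst hxa
      simp [mem_support, hσ'a]
    · by_cases hxb : x = b
      · subst hxb
        simp [mem_support, hσ'b]
      · simp [mem_support, hσ'x x hxa hxb, hxa, hxb]
  have habs : ({a, b} : Finset α) ⊆ σ.support := by
    intro x hx
    rcases Finset.mem_insert.mp hx with rfl | hx
    · exact ha
    · rw [Finset.mem_singleton.mp hx]
      rw [mem_support, hb, happ]
      exact fun h => hfa h.symm
  have hcard2 : ({a, b} : Finset α).card = 2 := by
    rw [Finset.card_insert_of_notMem (by simpa using hab), Finset.card_singleton]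
  have hcards : σ.support.card = 2 * (k + 1) := by
    rw [← sum_cycleType, hσ, Multiset.sum_replicate, smul_eq_mul, mul_comm]
  have hcard' : σ'.support.card = 2 * k := by
    rw [hsupp, Finset.card_sdiff_of_subset habs, hcard2, hcards]
    omega
  have hall : ∀ x ∈ σ'.cycleType, x = 2 := by
    intro x hx
    have h2 : 2 ≤ x := two_le_of_mem_cycleType hx
    have hdvd : x ∣ 2 := by
      have h1 : x ∣ orderOf σ' := by
        rw [← lcm_cycleType]
        exact Multiset.dvd_lcm hx
      have h2' : orderOf σ' ∣ 2 := orderOf_dvd_iff_pow_eq_one.mpr (by rwa [pow_two])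
      exact h1.trans h2'
    exact le_antisymm (Nat.le_of_dvd two_pos hdvd) h2
  have hrep := Multiset.eq_replicate_of_mem hall
  rw [hrep]
  congr 1
  have hsum : σ'.cycleType.sum = 2 * k := by rw [sum_cycleType, hcard']
  rw [hrep, Multiset.sum_replicate, smul_eq_mul] at hsum
  omega

private lemma norm_invol_mul_le (k : ℕ) : ∀ (σ g : Equiv.Perm α),
    σ.cycleType = Multiset.replicate k 2 → permNorm (σ * g) ≤ k + permNorm g := by
  induction k with
  | zero =>
    intro σ g hσ
    have : σ = 1 := by rwa [Multiset.replicate_zero, cycleType_eq_zero] at hσ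
    simp [this]
  | succ k ih =>
    intro σ g hσ
    have hne : σ ≠ 1 := by
      intro h
      rw [h, cycleType_one] at hσ
      exact absurd hσ.symm (by simp [Multiset.replicate_succ])
    obtain ⟨a, ha⟩ := Finset.nonempty_iff_ne_empty.mpr
      (fun h => hne (Equiv.Perm.support_eq_empty_iff.mp h))
    have hfa : σ a ≠ a := mem_support.mp ha
    have hab : a ≠ σ a := fun h => hfa h.symm
    have hσ' := invol_peel hσ ha
    have key : σ * g = (σ * Equiv.swap a (σ a)) * (Equiv.swap a (σ a) * g) := by
      rw [show (σ * Equiv.swap a (σ a)) * (Equiv.swap a (σ a) * g)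
        = σ * (Equiv.swap a (σ a) * Equiv.swap a (σ a)) * g by group, Equiv.swap_mul_self]
      group
    rw [key]
    calc permNorm (σ * Equiv.swap a (σ a) * (Equiv.swap a (σ a) * g))
        ≤ k + permNorm (Equiv.swap a (σ a) * g) := ih _ _ hσ'
      _ ≤ k + (permNorm g + 1) := Nat.add_le_add_left (permNorm_lip hab) k
      _ = (k + 1) + permNorm g := by omega

end Main

open Equiv Equiv.Perm in
/-- If `ρ ∈ S_h` has norm `j` and factors as `ρ = στ` with `σ` a product of `s`
disjoint transpositions and `τ` a single `(j+1−s)`-cycle (`1 ≤ s ≤ j−1`), then the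
cycle type of `ρ` is `(2^r, j+1−r)` for some `0 ≤ r ≤ j−2`, or `ρ` is a product of
`j` disjoint transpositions. -/
theorem cycleType_of_geodesic_factorization (h j s : ℕ) (hs1 : 1 ≤ s) (hs2 : s ≤ j - 1)
    (ρ : Equiv.Perm (Fin h)) (hρ : permNorm ρ = j)
    (hfac : ∃ σ τ : Equiv.Perm (Fin h),
      σ.cycleType = Multiset.replicate s 2 ∧
      τ.cycleType = {j + 1 - s} ∧ σ * τ = ρ) :
    (∃ r, r ≤ j - 2 ∧ ρ.cycleType = Multiset.replicate r 2 + {j + 1 - r}) ∨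
      ρ.cycleType = Multiset.replicate j 2 := by
  obtain ⟨σ, τ, hσ, hτ, hmul⟩ := hfac
  subst hmul
  have hj : s + 1 ≤ j := by omega
  set L := j + 1 - s with hL
  have hL2 : 2 ≤ L := by omega
  have hτc : τ.IsCycle := card_cycleType_eq_one.mp (by rw [hτ]; rfl)
  have hTcard : τ.support.card = L := by
    rw [← sum_cycleType, hτ, Multiset.sum_singleton]
  have hNτ : permNorm τ + 1 = L := by rw [IsCycle.permNorm_succ hτc, hTcard]
  -- σ is an involution
  have hord : orderOf σ ∣ 2 := by
    rw [← lcm_cycleType, hσ]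
    exact Multiset.lcm_dvd.mpr (fun x hx => by rw [Multiset.eq_of_mem_replicate hx])
  have hσ2 : σ * σ = 1 := by
    have := orderOf_dvd_iff_pow_eq_one.mp hord
    rwa [pow_two] at this
  have happ : ∀ x, σ (σ x) = x := fun x => by
    have : (σ * σ) x = (1 : Equiv.Perm (Fin h)) x := by rw [hσ2]
    simpa using this
  -- No transposition of σ has both endpoints in the support of τ
  have hNT : ∀ a, a ∈ σ.support → a ∈ τ.support → σ a ∉ τ.support := by
    intro a haσ haT hbT
    have hfa : σ a ≠ a := mem_support.mp haσ
    have hab : a ≠ σ a := fun hh => hfa hh.symm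
    have hσ' : (σ * Equiv.swap a (σ a)).cycleType = Multiset.replicate (s-1) 2 := by
      apply invol_peel (k := s - 1) ?_ haσ
      rw [hσ]
      congr 1
      omega
    set t := Equiv.swap a (σ a) with ht
    have hρeq : σ * τ = (σ * t) * (t * τ) := by
      rw [show (σ * t) * (t * τ) = σ * (t * t) * τ by group, ht, Equiv.swap_mul_self]
      group
    have hsub : (t * τ).support ⊆ τ.support := by
      intro x hx
      rcases Finset.mem_union.mp (support_mul_le t τ hx) with hx' | hx'
      · rw [ht, support_swap hab] at hx'
        rcases Finset.mem_insert.mp hx' with rfl | hx'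
        · exact haT
        · rw [Finset.mem_singleton.mp hx']
          exact hbT
      · exact hx'
    have hNtτ : permNorm (t * τ) ≤ L - 2 := by
      by_cases h1 : t * τ = 1
      · rw [h1, permNorm_one]
        omega
      · have h2 := permNorm_le_of_ne_one h1
        have h3 : (t * τ).support.card ≤ L := hTcard ▸ Finset.card_le_card hsub
        have hsign : (-1 : ℤˣ) ^ (permNorm (t * τ)) = (-1) ^ (1 + permNorm τ) := by
          rw [← sign_permNorm, Equiv.Perm.sign_mul, ht, Equiv.Perm.sign_swap hab,
            sign_permNorm τ, pow_add, pow_one]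
        have hpar := neg_one_pow_mod_eq hsign
        omega
    have hle : permNorm (σ * τ) ≤ (s - 1) + permNorm (t * τ) :=
      hρeq ▸ norm_invol_mul_le (s-1) _ _ hσ'
    omega
  -- key pointwise fact
  have hK1 : ∀ x, x ∉ τ.support → (σ * τ) x ∉ τ.support → (σ * τ) ((σ * τ) x) = x := by
    intro x hx hρx
    have hτx : τ x = x := notMem_support.mp hx
    have h1 : (σ * τ) x = σ x := by rw [Equiv.Perm.mul_apply, hτx]
    rw [h1] at hρx ⊢
    have hτσx : τ (σ x) = σ x := notMem_support.mp hρx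
    rw [Equiv.Perm.mul_apply, hτσx, happ]
  -- every point of supp τ is on the same (σ*τ)-cycle as its τ-image
  have hstep : ∀ x ∈ τ.support, (σ * τ).SameCycle x (τ x) := by
    intro x hx
    have h1 : (σ * τ) x = σ (τ x) := rfl
    have hself : (σ * τ).SameCycle x ((σ * τ) x) := ⟨1, by simp⟩
    by_cases hs' : τ x ∈ σ.support
    · have hτxT : τ x ∈ τ.support := apply_mem_support.mpr hx
      have hyT : σ (τ x) ∉ τ.support := hNT (τ x) hs' hτxT
      have h2 : (σ * τ) (σ (τ x)) = τ x := by
        rw [Equiv.Perm.mul_apply, notMem_support.mp hyT, happ]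
      have hsc2 : (σ * τ).SameCycle x ((σ * τ) ((σ * τ) x)) :=
        sameCycle_apply_right.mpr hself
      rw [h1, h2] at hsc2
      exact hsc2
    · have h2 : (σ * τ) x = τ x := by
        rw [h1, notMem_support.mp hs']
      exact h2 ▸ hself
  have hpow : ∀ x ∈ τ.support, ∀ n : ℕ, (σ * τ).SameCycle x ((τ ^ n) x) := by
    intro x hx n
    induction n with
    | zero => exact Equiv.Perm.SameCycle.refl _ _
    | succ n ih =>
      have hmem : (τ ^ n) x ∈ τ.support := pow_apply_mem_support.mpr hx
      have : (τ ^ (n+1)) x = τ ((τ ^ n) x) := by rw [pow_succ', Equiv.Perm.mul_apply]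
      rw [this]
      exact ih.trans (hstep _ hmem)
  have hB : ∀ x ∈ τ.support, ∀ y ∈ τ.support, (σ * τ).SameCycle x y := by
    intro x hx y hy
    have hsc := hτc.sameCycle (mem_support.mp hx) (mem_support.mp hy)
    obtain ⟨n, -, hn⟩ := hsc.exists_pow_eq_of_mem_support hx
    exact hn ▸ hpow x hx n
  -- every cycle factor of σ*τ of length ≥ 3 meets supp τ
  have hmeet : ∀ c ∈ (σ * τ).cycleFactorsFinset, 3 ≤ c.support.card →
      ∃ z ∈ c.support, z ∈ τ.support := by
    intro c hc h3
    by_contra hno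
    push_neg at hno
    obtain ⟨hcyc, hagree⟩ := mem_cycleFactorsFinset_iff.mp hc
    obtain ⟨x, hx⟩ := hcyc.nonempty_support
    have hcx : c x = (σ * τ) x := hagree x hx
    have hcxs : c x ∈ c.support := apply_mem_support.mpr hx
    have h2 : (σ * τ) ((σ * τ) x) = x := hK1 x (hno x hx) (hcx ▸ hno _ hcxs)
    have hccx : c (c x) = x := by
      rw [hcx, hagree _ (hcx ▸ hcxs)]
      exact h2
    have hsub : c.support ⊆ {x, c x} := by
      intro z hz
      have key : ∀ n : ℕ, (c ^ n) x = x ∨ (c ^ n) x = c x := by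
        intro n
        induction n with
        | zero => left; rfl
        | succ n ih =>
          have hcn : (c ^ (n+1)) x = c ((c ^ n) x) := by rw [pow_succ', Equiv.Perm.mul_apply]
          rcases ih with ih | ih
          · right; rw [hcn, ih]
          · left; rw [hcn, ih, hccx]
      have hsc := hcyc.sameCycle (mem_support.mp hx) (mem_support.mp hz)
      obtain ⟨n, -, hn⟩ := hsc.exists_pow_eq_of_mem_support hx
      rcases key n with hk | hk <;> rw [hn] at hk
      · rw [hk]; exact Finset.mem_insert_self _ _
      · rw [hk]; exact Finset.mem_insert_of_mem (Finset.mem_singleton_self _)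
    have : c.support.card ≤ 2 := by
      refine le_trans (Finset.card_le_card hsub) ?_
      refine le_trans (Finset.card_insert_le _ _) ?_
      simp
    omega
  -- at most one long cycle factor
  have hone : ∀ c₁ ∈ (σ * τ).cycleFactorsFinset, ∀ c₂ ∈ (σ * τ).cycleFactorsFinset,
      3 ≤ c₁.support.card → 3 ≤ c₂.support.card → c₁ = c₂ := by
    intro c₁ hc₁ c₂ hc₂ h31 h32
    obtain ⟨z₁, hz₁, hz₁T⟩ := hmeet c₁ hc₁ h31
    obtain ⟨z₂, hz₂, hz₂T⟩ := hmeet c₂ hc₂ h32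
    rw [cycle_is_cycleOf hz₁ hc₁, cycle_is_cycleOf hz₂ hc₂]
    exact (hB z₁ hz₁T z₂ hz₂T).cycleOf_eq
  have hfact2 : ∀ c ∈ (σ * τ).cycleFactorsFinset, 2 ≤ c.support.card := fun c hc =>
    (mem_cycleFactorsFinset_iff.mp hc).1.two_le_card_support
  by_cases hex : ∃ c ∈ (σ * τ).cycleFactorsFinset, 3 ≤ c.support.card
  · obtain ⟨c₀, hc₀, h3⟩ := hex
    have hc₀v : c₀ ∈ (σ * τ).cycleFactorsFinset.val := hc₀
    set R := (σ * τ).cycleFactorsFinset.val.erase c₀ with hR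
    set r := Multiset.card R with hr
    have hval : (σ * τ).cycleFactorsFinset.val = c₀ ::ₘ R := (Multiset.cons_erase hc₀v).symm
    have hrest : ∀ c ∈ R, c.support.card = 2 := by
      intro c hc
      have hcc := (Multiset.Nodup.mem_erase_iff (σ * τ).cycleFactorsFinset.nodup).mp hc
      have hcF : c ∈ (σ * τ).cycleFactorsFinset := hcc.2
      rcases Nat.lt_or_ge c.support.card 3 with hlt | hge
      · have := hfact2 c hcF
        omega
      · exact absurd (hone c hcF c₀ hc₀ hge h3) hcc.1
    have hM : (σ * τ).cycleType = c₀.support.card ::ₘ Multiset.replicate r 2 := by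
      rw [cycleType_def, hval, Multiset.map_cons]
      congr 1
      apply Multiset.eq_replicate.mpr
      constructor
      · rw [Multiset.card_map]
      · intro b hb
        obtain ⟨c, hc, hcb⟩ := Multiset.mem_map.mp hb
        rw [← hcb]
        exact hrest c hc
    have hNval : permNorm (σ * τ) = (c₀.support.card - 1) + r := by
      rw [permNorm, hM, Multiset.map_cons, Multiset.sum_cons, Multiset.map_replicate,
        Multiset.sum_replicate]
      simp
    left
    refine ⟨r, by omega, ?_⟩
    rw [hM, add_comm, Multiset.singleton_add]
    congr 1
    omega
  · right
    push_neg at hex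
    have hall : ∀ m ∈ (σ * τ).cycleType, m = 2 := by
      intro m hm
      obtain ⟨c, hc, hcm⟩ := Multiset.mem_map.mp (by rwa [cycleType_def] at hm)
      have h1 := hfact2 c hc
      have h2 := hex c hc
      simp only [Function.comp_apply] at hcm
      omega
    have hrep := Multiset.eq_replicate_of_mem hall
    have hNval : permNorm (σ * τ) = Multiset.card (σ * τ).cycleType := by
      rw [permNorm, hrep, Multiset.map_replicate, Multiset.sum_replicate]
      simp
    rw [hrep]
    congr 1
    omega
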